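/- Let $X_j \sim \mathrm{Poisson}(\lambda_j)$, $1 \le j \le n$, be independent with $\lambda_j > 0$, $S_n = \sum_{j=1}^n X_j$ and $W_n = \sum_{j=1}^n j X_j$. Then the complete exponential Bell polynomial satisfies $B_n(1!\lambda_1, 2!\lambda_2, \dots, n!\lambda_n) = \frac{n! \, P(W_n = n)}{P(S_n = 0)}$ for $n \ge 1$. -/

import Mathlib

open MeasureTheory ProbabilityTheory Real

/-- The `n`-th complete exponential Bell polynomial. -/
noncomputable def bellComplete (n : ℕ) (u : ℕ → ℝ) : ℝ :=
  ∑ c ∈ (Fintype.piFinset fun _ : Fin n => Finset.range (n + 1)).filter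
      (fun c => ∑ i, (i.1 + 1) * c i = n),
    ((n.factorial : ℝ) / ∏ i, ((c i).factorial : ℝ)) *
      ∏ i, (u (i.1 + 1) / ((i.1 + 1).factorial : ℝ)) ^ c i

/-- probabilistic formula for the complete exponential Bell
polynomial: `B_n(1!λ_1,…,n!λ_n) = n! P(W_n = n) / P(S_n = 0)` for `n ≥ 1`,
with independent `X_j ~ Poisson(λ_j)`, `λ_j > 0`, `S_n = ∑ X_j`,
`W_n = ∑ j X_j`. -/
theorem bellComplete_eq_poisson_prob
    {Ω : Type*} [MeasurableSpace Ω] (μ : Measure Ω) [IsProbabilityMeasure μ]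
    (n : ℕ) (hn : 1 ≤ n) (l : ℕ → ℝ) (hl : ∀ j, 0 < l j)
    (X : Fin n → Ω → ℕ) (hXmeas : ∀ j, Measurable (X j))
    (hindep : iIndepFun X μ)
    (hXdist : ∀ j m, μ {ω | X j ω = m} =
      ENNReal.ofReal (Real.exp (-(l (j.1 + 1))) * (l (j.1 + 1)) ^ m / m.factorial)) :
    bellComplete n (fun j => (j.factorial : ℝ) * l j) =
      (n.factorial : ℝ) *
        (μ {ω | (∑ j : Fin n, (j.1 + 1) * X j ω) = n}).toReal /
        (μ {ω | (∑ j : Fin n, X j ω) = 0}).toReal := by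
  -- real pmf values
  set q : Fin n → ℕ → ℝ := fun j m =>
    Real.exp (-(l (j.1 + 1))) * (l (j.1 + 1)) ^ m / m.factorial with hq
  have hqpos : ∀ j m, 0 < q j m := by
    intro j m
    exact div_pos (mul_pos (Real.exp_pos _) (pow_pos (hl _) _)) (by positivity)
  -- joint pmf
  have hjoint : ∀ c : Fin n → ℕ,
      μ (⋂ j, X j ⁻¹' {c j}) = ∏ j, ENNReal.ofReal (q j (c j)) := by
    intro c
    rw [hindep.meas_iInter (fun j => ⟨{c j}, measurableSet_singleton _, rfl⟩)]
    exact Finset.prod_congr rfl fun j _ => hXdist j (c j)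
  -- denominator
  have hS : {ω | (∑ j : Fin n, X j ω) = 0} = ⋂ j, X j ⁻¹' {(0 : ℕ)} := by
    ext ω
    simp [Finset.sum_eq_zero_iff, Set.mem_iInter]
  have hSval : (μ {ω | (∑ j : Fin n, X j ω) = 0}).toReal
      = ∏ j : Fin n, q j 0 := by
    rw [hS, hjoint, ← ENNReal.ofReal_prod_of_nonneg (fun i _ => (hqpos i 0).le),
      ENNReal.toReal_ofReal (Finset.prod_nonneg fun i _ => (hqpos i 0).le)]
  have hSpos : 0 < ∏ j : Fin n, q j 0 :=
    Finset.prod_pos fun i _ => hqpos i 0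
  -- the index set
  set F := (Fintype.piFinset fun _ : Fin n => Finset.range (n + 1)).filter
      (fun c => ∑ i, (i.1 + 1) * c i = n) with hF
  -- numerator decomposition
  have hW : {ω | (∑ j : Fin n, (j.1 + 1) * X j ω) = n}
      = ⋃ c ∈ F, ⋂ j, X j ⁻¹' {c j} := by
    ext ω
    simp only [Set.mem_setOf_eq, Set.mem_iUnion, Set.mem_iInter, Set.mem_preimage,
      Set.mem_singleton_iff, hF, Finset.mem_filter, Fintype.mem_piFinset,
      Finset.mem_range]
    constructor
    · intro h
      refine ⟨fun j => X j ω, ⟨fun j => ?_, h⟩, fun j => rfl⟩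
      have hle : (j.1 + 1) * X j ω ≤ n := by
        calc (j.1 + 1) * X j ω ≤ ∑ i : Fin n, (i.1 + 1) * X i ω :=
              Finset.single_le_sum (f := fun i : Fin n => (i.1 + 1) * X i ω) (fun i _ => Nat.zero_le _) (Finset.mem_univ j)
          _ = n := h
      have : X j ω ≤ n := le_trans (Nat.le_mul_of_pos_left _ (Nat.succ_pos _)) hle
      show X j ω < n + 1
      omega
    · rintro ⟨c, ⟨_, hc⟩, hcx⟩
      exact (Finset.sum_congr rfl fun j _ => by rw [hcx j]).trans hc
  have hdisj : (F : Set (Fin n → ℕ)).PairwiseDisjoint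
      (fun c => ⋂ j, X j ⁻¹' {c j}) := by
    intro c _ c' _ hne
    apply Set.disjoint_left.2
    intro ω h1 h2
    apply hne
    funext j
    have := Set.mem_iInter.1 h1 j
    have := Set.mem_iInter.1 h2 j
    simp_all
  have hmeasA : ∀ c ∈ F, MeasurableSet (⋂ j, X j ⁻¹' {(c : Fin n → ℕ) j}) :=
    fun c _ => MeasurableSet.iInter fun j => (hXmeas j) (measurableSet_singleton _)
  have hWval : (μ {ω | (∑ j : Fin n, (j.1 + 1) * X j ω) = n}).toReal
      = ∑ c ∈ F, ∏ j, q j (c j) := by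
    rw [hW, measure_biUnion_finset hdisj hmeasA]
    rw [show (∑ c ∈ F, μ (⋂ j, X j ⁻¹' {c j}))
        = ∑ c ∈ F, ENNReal.ofReal (∏ j, q j (c j)) from
      Finset.sum_congr rfl fun c _ => by
        rw [hjoint, ENNReal.ofReal_prod_of_nonneg (fun i _ => (hqpos i _).le)]]
    rw [← ENNReal.ofReal_sum_of_nonneg
      (fun c _ => Finset.prod_nonneg fun i _ => (hqpos i _).le)]
    exact ENNReal.toReal_ofReal (Finset.sum_nonneg fun c _ =>
      Finset.prod_nonneg fun i _ => (hqpos i _).le)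
  rw [hSval, hWval, bellComplete, Finset.mul_sum, Finset.sum_div]
  refine Finset.sum_congr rfl fun c _ => ?_
  have h1 : ∏ j : Fin n, q j (c j)
      = (∏ j : Fin n, q j 0) * ∏ j : Fin n, (l (j.1 + 1)) ^ c j / ((c j).factorial : ℝ) := by
    rw [← Finset.prod_mul_distrib]
    refine Finset.prod_congr rfl fun j _ => ?_
    simp [hq, Nat.factorial]
    ring
  rw [h1]
  have h2 : ∀ j : Fin n, ((j.1 + 1).factorial : ℝ) * l (j.1 + 1) / ((j.1 + 1).factorial : ℝ)
      = l (j.1 + 1) := fun j =>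
    mul_div_cancel_left₀ _ (Nat.cast_ne_zero.2 (Nat.factorial_ne_zero _))
  have h3 : (∏ i : Fin n, (((i.1 + 1).factorial : ℝ) * l (i.1 + 1) / ((i.1 + 1).factorial : ℝ)) ^ c i)
      = ∏ i : Fin n, (l (i.1 + 1)) ^ c i := by
    exact Finset.prod_congr rfl fun i _ => by rw [h2 i]
  rw [h3]
  have hfac : (∏ i : Fin n, ((c i).factorial : ℝ)) ≠ 0 :=
    Finset.prod_ne_zero_iff.2 fun i _ => Nat.cast_ne_zero.2 (Nat.factorial_ne_zero _)
  rw [Finset.prod_div_distrib]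
  rw [Finset.prod_div_distrib (f := fun j => l (j.1 + 1) ^ c j)]
  field_simp
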